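/- Fix a DAG G = ([n], E) with weights w ∈ ℝ^E and weight matrix C. For every DAG H with G^♭_w ⊆ H ⊆ G* and every choice of weights w' ∈ ℝ^{E(H)} on H with weight matrix C', one has Q(C') = Q(C) if and only if w'(e) = w*(e) for every edge e of G^♭_w and w'(e) ≥ w*(e) for every edge e ∈ E(H) \ E^♭_w. (Equivalently, the set of all weighted DAGs (H, w') between G^♭_w and G* with Q(C') = Q(C) is the compactification inside T^{E*} of the cone w* + cone(e_{j→i} : j→i ∈ E* \ E^♭_w) with respect to its recession cone.) -/

import Mathlib

open scoped Classical
noncomputable section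

/-- The min-plus tropical semiring `T = ℝ ∪ {∞}` with `⊕ = min` and `⊙ = +`. -/
abbrev Trop : Type := WithTop ℝ

/-- Min-plus identity matrix: `0` on the diagonal, `∞` off the diagonal. -/
def mpId {n : ℕ} : Matrix (Fin n) (Fin n) Trop := fun i j => if i = j then 0 else ⊤

/-- Min-plus matrix product. -/
def mpMul {n : ℕ} (A B : Matrix (Fin n) (Fin n) Trop) : Matrix (Fin n) (Fin n) Trop :=
  fun i j => Finset.univ.inf fun k => A i k + B k j

/-- Entrywise minimum (tropical sum) of matrices. -/
def mpAdd {n : ℕ} (A B : Matrix (Fin n) (Fin n) Trop) : Matrix (Fin n) (Fin n) Trop :=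
  fun i j => A i j ⊓ B i j

/-- Min-plus matrix power. -/
def mpPow {n : ℕ} (A : Matrix (Fin n) (Fin n) Trop) : ℕ → Matrix (Fin n) (Fin n) Trop
  | 0 => mpId
  | k + 1 => mpMul (mpPow A k) A

/-- Kleene star `A* = I ⊕ A ⊕ A^{⊙2} ⊕ ⋯ ⊕ A^{⊙(n−1)}`. -/
def kleene {n : ℕ} (A : Matrix (Fin n) (Fin n) Trop) : Matrix (Fin n) (Fin n) Trop :=
  fun i j => (Finset.range n).inf fun k => mpPow A k i j

/-- `p` is a directed path from `j` to `i` in the digraph with edge relation `E`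
(`E a b` meaning there is an edge `a → b`), recorded as its list of vertices. -/
def IsPathFrom {n : ℕ} (E : Fin n → Fin n → Prop) (j i : Fin n) (p : List (Fin n)) : Prop :=
  p.head? = some j ∧ p.getLast? = some i ∧ p.Chain' E

/-- A digraph is acyclic if the only paths from a vertex to itself are trivial. -/
def IsDAG {n : ℕ} (E : Fin n → Fin n → Prop) : Prop :=
  ∀ (j : Fin n) (p : List (Fin n)), IsPathFrom E j j p → p.length ≤ 1

/-- `C ∈ T^{n×n}` is supported on the digraph `E` : zero diagonal, and for `i ≠ j`
the entry `c_ij` is finite exactly when `j → i` is an edge. -/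
def SupportedOn {n : ℕ} (C : Matrix (Fin n) (Fin n) Trop) (E : Fin n → Fin n → Prop) : Prop :=
  (∀ i, C i i = 0) ∧ ∀ i j, i ≠ j → (C i j ≠ ⊤ ↔ E j i)

/-- The edge weight function of a weight matrix: `cw C a b = c_{ba}` is the weight of
the edge `a → b`. -/
def cw {n : ℕ} (C : Matrix (Fin n) (Fin n) Trop) : Fin n → Fin n → ℝ :=
  fun a b => WithTop.untopD 0 (C b a)

/-- Total weight of a path (sum of the weights of its consecutive edges). -/
def pathWeight {n : ℕ} (w : Fin n → Fin n → ℝ) (p : List (Fin n)) : ℝ :=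
  ((p.zip p.tail).map fun q => w q.1 q.2).sum

/-- The edge `j → i` belongs to the weighted transitive reduction `G^♭_w`:
the single edge is the unique minimum-weight directed path from `j` to `i`. -/
def InWTR {n : ℕ} (E : Fin n → Fin n → Prop) (w : Fin n → Fin n → ℝ) (j i : Fin n) : Prop :=
  E j i ∧ ∀ p : List (Fin n), IsPathFrom E j i p → p ≠ [j, i] → w j i < pathWeight w p

/-- Weighted digraph polyhedron `Q(C) = {x : x_i − x_j ≤ c_ij}` (as the saturated
subset of `ℝ^n` representing a subset of `ℝ^n/ℝ𝟙`). -/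
def wdp {n : ℕ} (C : Matrix (Fin n) (Fin n) Trop) : Set (Fin n → ℝ) :=
  {x | ∀ i j, i ≠ j → ((x i - x j : ℝ) : Trop) ≤ C i j}

/-- The tropical polyhedron generated by the columns of `V`: all min-plus linear
combinations `V ⊙ λ`, `λ ∈ ℝ^n` (as a saturated subset of `ℝ^d`). -/
def tconvM {d n : ℕ} (V : Matrix (Fin d) (Fin n) Trop) : Set (Fin d → ℝ) :=
  {x | ∃ lam : Fin n → ℝ, ∀ i, (x i : Trop) = Finset.univ.inf fun j => V i j + (lam j : Trop)}

/-- `v` is reachable from `s`. -/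
def Reaches {n : ℕ} (E : Fin n → Fin n → Prop) (s v : Fin n) : Prop :=
  ∃ p, IsPathFrom E s v p

/-- Edges of the transitive closure `G*`: `j → i` with `i ≠ j` reachable from `j`. -/
def EStar {n : ℕ} (E : Fin n → Fin n → Prop) (j i : Fin n) : Prop :=
  j ≠ i ∧ ∃ p, IsPathFrom E j i p

/-! ### Auxiliary path machinery -/

/-- Inductive paths with weight and edge count. -/
inductive PW {n : ℕ} (E : Fin n → Fin n → Prop) (w : Fin n → Fin n → ℝ) :
    Fin n → Fin n → ℝ → ℕ → Prop
  | nil (j : Fin n) : PW E w j j 0 0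
  | cons {j m i : Fin n} {c : ℝ} {k : ℕ} (h : E j m) (t : PW E w m i c k) :
      PW E w j i (w j m + c) (k + 1)

lemma PW.trans {n : ℕ} {E : Fin n → Fin n → Prop} {w : Fin n → Fin n → ℝ}
    {a b d : Fin n} {c1 c2 : ℝ} {k1 k2 : ℕ}
    (h1 : PW E w a b c1 k1) (h2 : PW E w b d c2 k2) : PW E w a d (c1 + c2) (k1 + k2) := by
  induction h1 with
  | nil j => simpa using h2
  | cons h t ih =>
    have := PW.cons h (ih h2)
    rw [add_assoc]
    simpa [Nat.add_right_comm] using this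

lemma pathWeight_cons {n : ℕ} (w : Fin n → Fin n → ℝ) (a b : Fin n) (l : List (Fin n)) :
    pathWeight w (a :: b :: l) = w a b + pathWeight w (b :: l) := by
  simp [pathWeight]

lemma pathWeight_single {n : ℕ} (w : Fin n → Fin n → ℝ) (a : Fin n) :
    pathWeight w [a] = 0 := by simp [pathWeight]

/-- Bridge: from PW to a list path. -/
lemma PW.toList {n : ℕ} {E : Fin n → Fin n → Prop} {w : Fin n → Fin n → ℝ}
    {j i : Fin n} {c : ℝ} {k : ℕ} (h : PW E w j i c k) :
    ∃ p, IsPathFrom E j i p ∧ pathWeight w p = c ∧ p.length = k + 1 := by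
  induction h with
  | nil j => exact ⟨[j], ⟨rfl, rfl, List.isChain_singleton j⟩, pathWeight_single w j, rfl⟩
  | cons h t ih =>
    rename_i j m i c k
    obtain ⟨p, ⟨hh, hl, hc⟩, hw, hlen⟩ := ih
    obtain ⟨p', rfl⟩ : ∃ p', p = m :: p' := by
      cases p with
      | nil => simp at hh
      | cons a p' =>
        have : a = m := by simpa using hh
        exact ⟨p', by rw [this]⟩
    exact ⟨j :: m :: p', ⟨rfl, by simpa [List.getLast?_cons_cons] using hl,
      (List.isChain_cons).2 ⟨fun y hy => by simp at hy; exact hy ▸ h, hc⟩⟩,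
      by rw [pathWeight_cons, hw], by simp [← hlen]⟩

/-- Bridge: from a list path to PW. -/
lemma IsPathFrom.toPW {n : ℕ} {E : Fin n → Fin n → Prop} (w : Fin n → Fin n → ℝ)
    {j i : Fin n} {p : List (Fin n)} (h : IsPathFrom E j i p) :
    PW E w j i (pathWeight w p) (p.length - 1) := by
  induction p generalizing j with
  | nil => simp [IsPathFrom] at h
  | cons a q ih =>
    obtain ⟨hh, hl, hc⟩ := h
    have haj : a = j := by simpa using hh
    subst haj
    cases q with
    | nil =>
      have : a = i := by simpa using hl
      subst this
      simpa [pathWeight_single] using PW.nil (E := E) (w := w) a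
    | cons b q' =>
      have hc' := (List.isChain_cons ).1 hc
      have hE : E a b := hc'.1 b rfl
      have ht : IsPathFrom E b i (b :: q') :=
        ⟨rfl, by simpa [List.getLast?_cons_cons] using hl, hc'.2⟩
      have := PW.cons hE (ih ht)
      simpa [pathWeight_cons] using this

lemma PW.eq_of_zero {n : ℕ} {E : Fin n → Fin n → Prop} {w : Fin n → Fin n → ℝ}
    {j i : Fin n} {c : ℝ} (h : PW E w j i c 0) : j = i ∧ c = 0 := by
  cases h; exact ⟨rfl, rfl⟩

section DAG
variable {n : ℕ} {E : Fin n → Fin n → Prop} (hdag : IsDAG E)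

include hdag

lemma edge_ne {j i : Fin n} (h : E j i) : j ≠ i := by
  rintro rfl
  have : IsPathFrom E j j [j, j] := ⟨rfl, rfl, List.isChain_pair.2 h⟩
  simpa using hdag j _ this

/-- On a DAG, PW-cycles are trivial. -/
lemma PW.zero_of_dag {w : Fin n → Fin n → ℝ} {j : Fin n} {c : ℝ} {k : ℕ}
    (h : PW E w j j c k) : k = 0 := by
  obtain ⟨p, hp, -, hlen⟩ := h.toList
  have := hdag j p hp
  omega

end DAG

lemma IsPathFrom.cons {n : ℕ} {E : Fin n → Fin n → Prop} {m v j : Fin n} {p : List (Fin n)}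
    (h : IsPathFrom E m v p) (he : E j m) : IsPathFrom E j v (j :: p) := by
  obtain ⟨hh, hl, hc⟩ := h
  cases p with
  | nil => simp at hh
  | cons a q =>
    have : a = m := by simpa using hh
    subst this
    exact ⟨rfl, by simpa [List.getLast?_cons_cons] using hl,
      (List.isChain_cons).2 ⟨fun y hy => by simp at hy; exact hy ▸ he, hc⟩⟩

/-- `rk j` : number of vertices reachable from `j`. -/
def rk {n : ℕ} (E : Fin n → Fin n → Prop) (j : Fin n) : ℕ :=
  (Finset.univ.filter fun v => Reaches E j v).card

lemma reaches_self {n : ℕ} (E : Fin n → Fin n → Prop) (j : Fin n) : Reaches E j j :=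
  ⟨[j], rfl, rfl, List.isChain_singleton j⟩

lemma rk_lt_of_edge {n : ℕ} {E : Fin n → Fin n → Prop} (hdag : IsDAG E)
    {j m : Fin n} (h : E j m) : rk E m < rk E j := by
  apply Finset.card_lt_card
  constructor
  · intro v hv
    simp only [Finset.mem_filter, Finset.mem_univ, true_and] at hv ⊢
    obtain ⟨p, hp⟩ := hv
    exact ⟨j :: p, hp.cons h⟩
  · intro hsub
    have hjm : j ∈ Finset.univ.filter fun v => Reaches E j v := by
      simp [reaches_self]
    have := hsub hjm
    simp only [Finset.mem_filter, Finset.mem_univ, true_and] at this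
    obtain ⟨p, hp⟩ := this
    have hpath : IsPathFrom E j j (j :: p) := hp.cons h
    have hlen := hdag j (j :: p) hpath
    have : p ≠ [] := by
      rintro rfl; exact absurd hp.1 (by simp)
    simp at hlen
    exact this hlen

lemma PW.lt_rk {n : ℕ} {E : Fin n → Fin n → Prop} (hdag : IsDAG E)
    {w : Fin n → Fin n → ℝ} {j i : Fin n} {c : ℝ} {k : ℕ}
    (h : PW E w j i c k) : k + 1 ≤ rk E j := by
  induction h with
  | nil j =>
    have : j ∈ Finset.univ.filter fun v => Reaches E j v := by simp [reaches_self]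
    simpa [rk] using Finset.card_pos.2 ⟨j, this⟩
  | cons he t ih =>
    have := rk_lt_of_edge hdag he
    omega

lemma PW.lt_n {n : ℕ} {E : Fin n → Fin n → Prop} (hdag : IsDAG E)
    {w : Fin n → Fin n → ℝ} {j i : Fin n} {c : ℝ} {k : ℕ}
    (h : PW E w j i c k) : k < n := by
  have h1 := h.lt_rk hdag
  have h2 : rk E j ≤ n := by
    simpa [rk] using (Finset.card_filter_le Finset.univ fun v => Reaches E j v)
  omega

/-! ### Trop helpers -/

lemma coe_cw {n : ℕ} {D : Matrix (Fin n) (Fin n) Trop} {a b : Fin n} (h : D b a ≠ ⊤) :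
    D b a = ((cw D a b : ℝ) : Trop) := by
  obtain ⟨r, hr⟩ := WithTop.ne_top_iff_exists.1 h
  rw [← hr]; simp [cw, ← hr]

lemma tadd_inf (a b c : Trop) : a + (b ⊓ c) = (a + b) ⊓ (a + c) := by
  rcases le_total b c with h | h
  · rw [inf_eq_left.2 h, inf_eq_left.2 (add_le_add le_rfl h)]
  · rw [inf_eq_right.2 h, inf_eq_right.2 (add_le_add le_rfl h)]

/-! ### Generic kleene facts -/

section Generic
variable {n : ℕ} {R : Fin n → Fin n → Prop} {D : Matrix (Fin n) (Fin n) Trop}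
  (hsupp : SupportedOn D R)
  (hne : ∀ a b, R a b → a ≠ b)
  (hbound : ∀ {j i : Fin n} {c : ℝ} {k : ℕ}, PW R (cw D) j i c k → k < n)
  (hzero : ∀ {j : Fin n} {c : ℝ} {k : ℕ}, PW R (cw D) j j c k → k = 0)

include hsupp hne in
lemma entry_of_edge {a b : Fin n} (h : R a b) : D b a = ((cw D a b : ℝ) : Trop) :=
  coe_cw (((hsupp.2 b a (hne a b h).symm).2 h))

include hsupp hne in
lemma mpPow_le_path {j i : Fin n} {c : ℝ} {k : ℕ} (h : PW R (cw D) j i c k) :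
    mpPow D k i j ≤ (c : Trop) := by
  induction h with
  | nil j => simp [mpPow, mpId]
  | cons he t ih =>
    rename_i j m i c k
    calc mpPow D (k+1) i j ≤ mpPow D k i m + D m j :=
          Finset.inf_le (Finset.mem_univ m)
    _ ≤ (c : Trop) + ((cw D j m : ℝ) : Trop) := by
        rw [← entry_of_edge hsupp hne he]
        exact add_le_add ih le_rfl
    _ = ((cw D j m + c : ℝ) : Trop) := by rw [← WithTop.coe_add, add_comm]

include hsupp hne hbound in
lemma kleene_le_path {j i : Fin n} {c : ℝ} {k : ℕ} (h : PW R (cw D) j i c k) :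
    kleene D i j ≤ (c : Trop) :=
  le_trans (Finset.inf_le (Finset.mem_range.2 (hbound h))) (mpPow_le_path hsupp hne h)

include hsupp hne in
lemma mpPow_exists_path {j i : Fin n} {k : ℕ} (h : mpPow D k i j ≠ ⊤) :
    ∃ c k', PW R (cw D) j i c k' ∧ (c : Trop) ≤ mpPow D k i j := by
  induction k generalizing j with
  | zero =>
    by_cases hij : i = j
    · subst hij; exact ⟨0, 0, PW.nil i, by simp [mpPow, mpId]⟩
    · simp [mpPow, mpId, hij] at h
  | succ k ih =>
    have : Nonempty (Fin n) := ⟨i⟩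
    obtain ⟨m, -, hm⟩ := Finset.exists_mem_eq_inf Finset.univ
      Finset.univ_nonempty fun m => mpPow D k i m + D m j
    have hval : mpPow D (k+1) i j = mpPow D k i m + D m j := hm
    rw [hval] at h ⊢
    have h1 : mpPow D k i m ≠ ⊤ := fun ht => h (by simp [ht])
    have h2 : D m j ≠ ⊤ := fun ht => h (by simp [ht])
    obtain ⟨c, k', hp, hle⟩ := ih h1
    by_cases hmj : m = j
    · subst hmj
      refine ⟨c, k', hp, ?_⟩
      calc (c : Trop) ≤ mpPow D k i m := hle
      _ = mpPow D k i m + D m m := by rw [hsupp.1 m, add_zero]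
    · have hedge : R j m := (hsupp.2 m j hmj).1 h2
      refine ⟨cw D j m + c, k' + 1, PW.cons hedge hp, ?_⟩
      rw [WithTop.coe_add]
      rw [entry_of_edge hsupp hne hedge]
      rw [add_comm]
      exact add_le_add hle le_rfl

include hsupp hne in
lemma kleene_exists_path {j i : Fin n} (h : kleene D i j ≠ ⊤) :
    ∃ c k', PW R (cw D) j i c k' ∧ (c : Trop) ≤ kleene D i j := by
  have hn : 0 < n := Fin.pos i
  obtain ⟨k, -, hk⟩ := Finset.exists_mem_eq_inf (Finset.range n)
    ⟨0, Finset.mem_range.2 hn⟩ fun k => mpPow D k i j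
  rw [show kleene D i j = mpPow D k i j from hk] at h ⊢
  exact mpPow_exists_path hsupp hne h

include hsupp hne hzero in
lemma kleene_diag (i : Fin n) : kleene D i i = 0 := by
  have hn : 0 < n := Fin.pos i
  have h1 : kleene D i i ≤ 0 :=
    le_trans (Finset.inf_le (f := fun k => mpPow D k i i) (Finset.mem_range.2 hn))
      (by simp [mpPow, mpId])
  refine le_antisymm h1 ?_
  by_cases h : kleene D i i = ⊤
  · simp [h] at h1
  obtain ⟨c, k', hp, hle⟩ := kleene_exists_path hsupp hne h
  have := hzero hp
  subst this
  obtain ⟨-, rfl⟩ := hp.eq_of_zero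
  simpa using hle

include hsupp hne hbound in
lemma kleene_le_entry (i j : Fin n) : kleene D i j ≤ D i j := by
  by_cases hij : i = j
  · subst hij
    rw [hsupp.1 i]
    have hn : 0 < n := Fin.pos i
    exact le_trans (Finset.inf_le (f := fun k => mpPow D k i i) (Finset.mem_range.2 hn))
      (by simp [mpPow, mpId])
  by_cases h : D i j = ⊤
  · simp [h]
  have hedge : R j i := (hsupp.2 i j hij).1 h
  have hp : PW R (cw D) j i (cw D j i + 0) 1 := PW.cons hedge (PW.nil i)
  have := kleene_le_path hsupp hne hbound hp
  rwa [add_zero, ← entry_of_edge hsupp hne hedge] at this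

include hsupp hne hbound in
lemma kleene_triangle (i k j : Fin n) :
    kleene D i j ≤ kleene D i k + kleene D k j := by
  by_cases h1 : kleene D i k = ⊤
  · simp [h1]
  by_cases h2 : kleene D k j = ⊤
  · simp [h2]
  obtain ⟨c1, k1, hp1, hle1⟩ := kleene_exists_path hsupp hne h2
  obtain ⟨c2, k2, hp2, hle2⟩ := kleene_exists_path hsupp hne h1
  have hcat := hp1.trans hp2
  calc kleene D i j ≤ ((c1 + c2 : ℝ) : Trop) := kleene_le_path hsupp hne hbound hcat
  _ = (c1 : Trop) + (c2 : Trop) := WithTop.coe_add c1 c2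
  _ ≤ kleene D k j + kleene D i k := add_le_add hle1 hle2
  _ = kleene D i k + kleene D k j := add_comm _ _

end Generic

/-! ### Summing constraints along paths -/

lemma sum_along {n : ℕ} {S : Fin n → Fin n → Prop} {w : Fin n → Fin n → ℝ}
    {x : Fin n → ℝ} (hx : ∀ a b, S a b → x b - x a ≤ w a b)
    {j i : Fin n} {c : ℝ} {k : ℕ} (h : PW S w j i c k) : x i - x j ≤ c := by
  induction h with
  | nil j => simp
  | cons he t ih =>
    have := hx _ _ he
    linarith

lemma wdp_edge {n : ℕ} {R : Fin n → Fin n → Prop} {D : Matrix (Fin n) (Fin n) Trop}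
    (hsupp : SupportedOn D R) (hne : ∀ a b, R a b → a ≠ b)
    {x : Fin n → ℝ} (hx : x ∈ wdp D) {a b : Fin n} (h : R a b) :
    x b - x a ≤ cw D a b := by
  have h1 := hx b a (hne a b h).symm
  rw [entry_of_edge hsupp hne h] at h1
  exact_mod_cast h1

/-! ### The Y and X constructions -/

section Constr
variable {n : ℕ} {R : Fin n → Fin n → Prop} {D : Matrix (Fin n) (Fin n) Trop}
  (hsupp : SupportedOn D R)
  (hne : ∀ a b, R a b → a ≠ b)
  (hbound : ∀ {j i : Fin n} {c : ℝ} {k : ℕ}, PW R (cw D) j i c k → k < n)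

/-- `Ymat D v = (min_u kleene D v u) ⊓ 0`, always finite, a point of `wdp D`. -/
def Ymat (D : Matrix (Fin n) (Fin n) Trop) (v : Fin n) : Trop :=
  (Finset.univ.inf fun u => kleene D v u) ⊓ 0

lemma Ymat_ne_top (v : Fin n) : Ymat D v ≠ ⊤ := by
  intro h
  have : Ymat D v ≤ 0 := inf_le_right
  rw [h] at this
  exact (by simp : ¬ ((⊤ : Trop) ≤ (0:ℝ))) (by exact_mod_cast this)

include hsupp hne hbound in
lemma Ymat_le {a b : Fin n} (h : R a b) : Ymat D b ≤ D b a + Ymat D a := by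
  have hnonempty : Nonempty (Fin n) := ⟨a⟩
  obtain ⟨u0, -, hu0⟩ := Finset.exists_mem_eq_inf Finset.univ
    Finset.univ_nonempty fun u => kleene D a u
  have hYa : Ymat D a = kleene D a u0 ⊓ 0 := by rw [Ymat, ← hu0]
  rw [hYa]
  rcases le_total (kleene D a u0) 0 with hc | hc
  · rw [inf_eq_left.2 hc]
    calc Ymat D b ≤ Finset.univ.inf fun u => kleene D b u := inf_le_left
    _ ≤ kleene D b u0 := Finset.inf_le (Finset.mem_univ u0)
    _ ≤ kleene D b a + kleene D a u0 := kleene_triangle hsupp hne hbound b a u0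
    _ ≤ D b a + kleene D a u0 := add_le_add (kleene_le_entry hsupp hne hbound b a) le_rfl
  · rw [inf_eq_right.2 hc]
    calc Ymat D b ≤ Finset.univ.inf fun u => kleene D b u := inf_le_left
    _ ≤ kleene D b a := Finset.inf_le (Finset.mem_univ a)
    _ ≤ D b a := kleene_le_entry hsupp hne hbound b a
    _ = D b a + 0 := (add_zero _).symm

include hsupp hne hbound in
/-- Main construction: a point of `wdp D` with `x j = 0` and `x i` realizing `kleene D i j`. -/
lemma exists_point
    (hzero : ∀ {j : Fin n} {c : ℝ} {k : ℕ}, PW R (cw D) j j c k → k = 0)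
    (j i : Fin n) (hk : kleene D i j ≠ ⊤) :
    ∃ x ∈ wdp D, x j = 0 ∧ ((x i : ℝ) : Trop) = kleene D i j := by
  obtain ⟨κ, hκ⟩ := WithTop.ne_top_iff_exists.1 hk
  obtain ⟨yj, hyj⟩ := WithTop.ne_top_iff_exists.1 (Ymat_ne_top (D := D) j)
  obtain ⟨yi, hyi⟩ := WithTop.ne_top_iff_exists.1 (Ymat_ne_top (D := D) i)
  set M : ℝ := max (-yj) (κ - yi) with hM
  set X : Fin n → Trop := fun v => kleene D v j ⊓ ((M : Trop) + Ymat D v) with hX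
  have hXcoe : ∀ v, (((WithTop.untopD 0 (X v) : ℝ)) : Trop) = X v := by
    intro v
    have h2 : (M : Trop) + Ymat D v ≠ ⊤ := by
      obtain ⟨yv, hyv⟩ := WithTop.ne_top_iff_exists.1 (Ymat_ne_top (D := D) v)
      rw [← hyv, ← WithTop.coe_add]
      exact WithTop.coe_ne_top
    have hne' : X v ≠ ⊤ := by
      intro h
      have h3 : X v ≤ (M : Trop) + Ymat D v := inf_le_right
      rw [h, top_le_iff] at h3
      exact h2 h3
    obtain ⟨r, hr⟩ := WithTop.ne_top_iff_exists.1 hne'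
    rw [← hr, WithTop.untopD_coe]
  set x : Fin n → ℝ := fun v => WithTop.untopD 0 (X v) with hx
  have hmem : x ∈ wdp D := by
    intro a b hab
    by_cases hDab : D a b = ⊤
    · rw [hDab]; exact le_top
    have hedge : R b a := (hsupp.2 a b hab).1 hDab
    have hstep : X a ≤ D a b + X b := by
      rw [hX]
      simp only []
      rw [tadd_inf]
      refine le_inf ?_ ?_
      · calc kleene D a j ⊓ ((M : Trop) + Ymat D a) ≤ kleene D a j := inf_le_left
        _ ≤ kleene D a b + kleene D b j := kleene_triangle hsupp hne hbound a b j
        _ ≤ D a b + kleene D b j := add_le_add (kleene_le_entry hsupp hne hbound a b) le_rfl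
      · calc kleene D a j ⊓ ((M : Trop) + Ymat D a) ≤ (M : Trop) + Ymat D a := inf_le_right
        _ ≤ (M : Trop) + (D a b + Ymat D b) :=
            add_le_add le_rfl (Ymat_le hsupp hne hbound hedge)
        _ = D a b + ((M : Trop) + Ymat D b) := add_left_comm _ _ _
    rw [entry_of_edge hsupp hne hedge] at hstep ⊢
    have hcb := hXcoe b
    have hca := hXcoe a
    rw [← hca, ← hcb, ← WithTop.coe_add] at hstep
    have : (x a : ℝ) ≤ cw D b a + x b := by exact_mod_cast hstep
    have : x a - x b ≤ cw D b a := by linarith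
    exact_mod_cast WithTop.coe_le_coe.2 this
  have hXj : X j = 0 := by
    rw [hX]
    simp only []
    rw [kleene_diag hsupp hne hzero, ← hyj, ← WithTop.coe_add]
    refine inf_eq_left.2 ?_
    have : (0:ℝ) ≤ M + yj := by
      have : -yj ≤ M := le_max_left _ _
      linarith
    exact_mod_cast WithTop.coe_le_coe.2 this
  have hXi : X i = kleene D i j := by
    rw [hX]
    simp only []
    rw [← hκ, ← hyi, ← WithTop.coe_add]
    refine inf_eq_left.2 ?_
    have : κ ≤ M + yi := by
      have : κ - yi ≤ M := le_max_right _ _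
      linarith
    exact_mod_cast WithTop.coe_le_coe.2 this
  refine ⟨x, hmem, ?_, ?_⟩
  · show WithTop.untopD 0 (X j) = 0
    rw [hXj]
    rfl
  · rw [hXcoe i, hXi]

end Constr

/-! ### Weighted transitive reduction facts -/

section WTR
variable {n : ℕ} {E : Fin n → Fin n → Prop} {C : Matrix (Fin n) (Fin n) Trop}
  (hdag : IsDAG E) (hsupp : SupportedOn C E)

include hdag hsupp

/-- On a wtr edge, the kleene star entry equals the original entry. -/
lemma wtr_kleene {j i : Fin n} (hw : InWTR E (cw C) j i) :
    kleene C i j = ((cw C j i : ℝ) : Trop) ∧ C i j = ((cw C j i : ℝ) : Trop) := by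
  have hedge := hw.1
  have hneE : ∀ a b, E a b → a ≠ b := fun a b h => edge_ne hdag h
  have hboundE : ∀ {j i : Fin n} {c : ℝ} {k : ℕ}, PW E (cw C) j i c k → k < n :=
    fun h => h.lt_n hdag
  have hCij : C i j = ((cw C j i : ℝ) : Trop) := entry_of_edge hsupp hneE hedge
  have le1 : kleene C i j ≤ ((cw C j i : ℝ) : Trop) := by
    rw [← hCij]; exact kleene_le_entry hsupp hneE hboundE i j
  refine ⟨le_antisymm le1 ?_, hCij⟩
  have hk : kleene C i j ≠ ⊤ := fun h => by simp [h] at le1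
  obtain ⟨c, k', hp, hle⟩ := kleene_exists_path hsupp hneE hk
  obtain ⟨p, hpp, hwt, -⟩ := hp.toList
  by_cases hpe : p = [j, i]
  · subst hpe
    rw [pathWeight_cons, pathWeight_single] at hwt
    calc ((cw C j i : ℝ) : Trop) = (c : Trop) := by rw [← hwt]; norm_num
    _ ≤ kleene C i j := hle
  · exfalso
    have hlt := hw.2 p hpp hpe
    rw [hwt] at hlt
    have : (c : Trop) ≤ ((cw C j i : ℝ) : Trop) := le_trans hle le1
    have : c ≤ cw C j i := by exact_mod_cast this
    linarith

/-- Every path can be replaced by a wtr-only path of no greater weight. -/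
lemma wtr_span : ∀ N (j i : Fin n) (c : ℝ) (k : ℕ),
    rk E j * (n+1) + (n - k) ≤ N → PW E (cw C) j i c k →
    ∃ c' k', c' ≤ c ∧ PW (InWTR E (cw C)) (cw C) j i c' k' := by
  intro N
  induction N using Nat.strong_induction_on with
  | _ N IH =>
    intro j i c k hμ hp
    cases hp with
    | nil => exact ⟨0, 0, le_rfl, PW.nil j⟩
    | cons he t =>
      rename_i m c2 k2
      by_cases hw : InWTR E (cw C) j m
      · have hrk : rk E m < rk E j := rk_lt_of_edge hdag he
        have hmul : (rk E m + 1) * (n+1) ≤ rk E j * (n+1) :=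
          Nat.mul_le_mul_right (n+1) hrk
        have hμ' : rk E m * (n+1) + (n - k2) < N := by
          have h1 : n - k2 ≤ n := Nat.sub_le _ _
          have h2 : (rk E m + 1) * (n+1) = rk E m * (n+1) + (n+1) := by ring
          omega
        obtain ⟨c2', k2', hle, hq⟩ := IH _ hμ' m i c2 k2 le_rfl t
        exact ⟨cw C j m + c2', k2' + 1, by linarith, PW.cons hw hq⟩
      · have hjm : j ≠ m := edge_ne hdag he
        rw [InWTR, not_and] at hw
        push_neg at hw
        obtain ⟨p, hpp, hpe, hwle⟩ := hw he
        have hr := hpp.toPW (cw C)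
        have hlen3 : 3 ≤ p.length := by
          rcases p with _ | ⟨a, _ | ⟨b, _ | ⟨d, q⟩⟩⟩
          · exact absurd hpp.1 (by simp)
          · obtain ⟨h1, h2, -⟩ := hpp
            simp at h1 h2
            exact absurd (h1.symm.trans h2) hjm
          · obtain ⟨h1, h2, -⟩ := hpp
            simp at h1 h2
            subst h1; subst h2
            exact absurd rfl hpe
          · simp
        have combined := hr.trans t
        have hklt : k2 + 1 < n := (PW.cons he t).lt_n hdag
        have hknew : p.length - 1 + k2 < n := combined.lt_n hdag
        have hμ'' : rk E j * (n+1) + (n - (p.length - 1 + k2)) < N := by omega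
        obtain ⟨c', k', hle, hq⟩ := IH _ hμ'' j i _ _ le_rfl combined
        exact ⟨c', k', by linarith, hq⟩

end WTR

/-! ### Transfer from H to G -/

section Transfer
variable {n : ℕ} {E EH : Fin n → Fin n → Prop} {C C' : Matrix (Fin n) (Fin n) Trop}
  (hdag : IsDAG E) (hsupp : SupportedOn C E)
  (hsub : ∀ j i, EH j i → EStar E j i)

include hdag hsub in
lemma PW_EH_to_E {w2 : Fin n → Fin n → ℝ} {j i : Fin n} {c : ℝ} {k : ℕ}
    (h : PW EH w2 j i c k) : ∃ c3 k3, PW E (cw C) j i c3 k3 ∧ k ≤ k3 := by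
  induction h with
  | nil j => exact ⟨0, 0, PW.nil j, le_rfl⟩
  | cons he t ih =>
    rename_i j m i c k
    obtain ⟨c3, k3, hp, hk3⟩ := ih
    obtain ⟨hne, p, hpp⟩ := hsub _ _ he
    have hr := hpp.toPW (cw C)
    have hpos : 1 ≤ p.length - 1 := by
      by_contra hcon
      push_neg at hcon
      interval_cases h : p.length - 1
      · exact hne hr.eq_of_zero.1
    exact ⟨_, _, hr.trans hp, by omega⟩

include hsub in
lemma EH_ne {a b : Fin n} (h : EH a b) : a ≠ b := (hsub _ _ h).1

include hdag hsupp hsub in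
lemma EH_bound {w2 : Fin n → Fin n → ℝ} {j i : Fin n} {c : ℝ} {k : ℕ}
    (h : PW EH w2 j i c k) : k < n := by
  obtain ⟨c3, k3, hp, hk3⟩ := PW_EH_to_E (C := C) hdag hsub h
  have := hp.lt_n hdag
  omega

include hdag hsupp hsub in
lemma EH_zero {w2 : Fin n → Fin n → ℝ} {j : Fin n} {c : ℝ} {k : ℕ}
    (h : PW EH w2 j j c k) : k = 0 := by
  obtain ⟨c3, k3, hp, hk3⟩ := PW_EH_to_E (C := C) hdag hsub h
  have := PW.zero_of_dag hdag hp
  omega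

include hdag hsupp hsub in
/-- If `kleene C ≤ C'` on all `EH`-edges, then `EH`-paths are bounded below by
`kleene C` distances. -/
lemma eh_path_lb (hsupp' : SupportedOn C' EH)
    (hb : ∀ a b, EH a b → kleene C b a ≤ C' b a)
    {a b : Fin n} {c : ℝ} {k : ℕ} (h : PW EH (cw C') a b c k) :
    kleene C b a ≤ (c : Trop) := by
  have hneE : ∀ a b, E a b → a ≠ b := fun a b h => edge_ne hdag h
  have hboundE : ∀ {j i : Fin n} {c : ℝ} {k : ℕ}, PW E (cw C) j i c k → k < n :=
    fun h => h.lt_n hdag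
  have hzeroE : ∀ {j : Fin n} {c : ℝ} {k : ℕ}, PW E (cw C) j j c k → k = 0 :=
    fun h => PW.zero_of_dag hdag h
  induction h with
  | nil a => rw [kleene_diag hsupp hneE hzeroE]; simp
  | cons he t ih =>
    rename_i a m b c k
    calc kleene C b a ≤ kleene C b m + kleene C m a :=
          kleene_triangle hsupp hneE hboundE b m a
    _ ≤ (c : Trop) + C' m a := add_le_add ih (hb a m he)
    _ = (c : Trop) + ((cw C' a m : ℝ) : Trop) := by
        rw [entry_of_edge hsupp' (fun x y hxy => EH_ne hsub hxy) he]
    _ = ((cw C' a m + c : ℝ) : Trop) := by rw [← WithTop.coe_add, add_comm]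

end Transfer

/-- Fix a weighted DAG `(G, w)` with weight matrix `C`. For every DAG
`H` with `G^♭_w ⊆ H ⊆ G*` and every weights `w'` on `H` with weight matrix `C'`, one has
`Q(C') = Q(C)` iff `w'(e) = w*(e)` for every edge `e` of `G^♭_w` and `w'(e) ≥ w*(e)` for
every edge `e ∈ E(H) \ E^♭_w` (the entry `(kleene C) i j` being `w*(j→i)`). -/
theorem stmt7 {n : ℕ} (E EH : Fin n → Fin n → Prop) (C C' : Matrix (Fin n) (Fin n) Trop)
    (hdag : IsDAG E) (hsupp : SupportedOn C E)
    (hflat : ∀ j i, InWTR E (cw C) j i → EH j i)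
    (hsub : ∀ j i, EH j i → EStar E j i)
    (hsupp' : SupportedOn C' EH) :
    wdp C' = wdp C ↔
      (∀ j i, InWTR E (cw C) j i → C' i j = kleene C i j) ∧
      (∀ j i, EH j i → ¬ InWTR E (cw C) j i → kleene C i j ≤ C' i j) := by
  have hneE : ∀ a b, E a b → a ≠ b := fun a b h => edge_ne hdag h
  have hboundE : ∀ {j i : Fin n} {c : ℝ} {k : ℕ}, PW E (cw C) j i c k → k < n :=
    fun h => h.lt_n hdag
  have hzeroE : ∀ {j : Fin n} {c : ℝ} {k : ℕ}, PW E (cw C) j j c k → k = 0 :=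
    fun h => PW.zero_of_dag hdag h
  have hneH : ∀ a b, EH a b → a ≠ b := fun a b h => EH_ne hsub h
  have hboundH : ∀ {j i : Fin n} {c : ℝ} {k : ℕ}, PW EH (cw C') j i c k → k < n :=
    fun h => EH_bound (C := C) hdag hsupp hsub h
  have hzeroH : ∀ {j : Fin n} {c : ℝ} {k : ℕ}, PW EH (cw C') j j c k → k = 0 :=
    fun h => EH_zero (C := C) hdag hsupp hsub h
  constructor
  · -- forward direction
    intro hQ
    -- the lower bound on all EH edges
    have hb : ∀ j i, EH j i → kleene C i j ≤ C' i j := by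
      intro j i he
      obtain ⟨hne, p, hpp⟩ := hsub j i he
      have hr := hpp.toPW (cw C)
      have hkfin : kleene C i j ≠ ⊤ := by
        have h1 := kleene_le_path hsupp hneE hboundE hr
        exact fun h => by simp [h] at h1
      obtain ⟨x, hx, hxj, hxi⟩ := exists_point hsupp hneE hboundE hzeroE j i hkfin
      have hx' : x ∈ wdp C' := by rw [hQ]; exact hx
      have h2 := hx' i j hne.symm
      rw [hxj, sub_zero] at h2
      rw [← hxi]
      exact h2
    refine ⟨?_, fun j i he _ => hb j i he⟩
    intro j i hw
    have heH : EH j i := hflat j i hw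
    obtain ⟨hkval, hCval⟩ := wtr_kleene hdag hsupp hw
    have hC'fin : C' i j ≠ ⊤ := (hsupp'.2 i j (hneH j i heH).symm).2 heH
    have hk'fin : kleene C' i j ≠ ⊤ := fun h =>
      hC'fin (top_le_iff.1 (h ▸ kleene_le_entry hsupp' hneH hboundH i j))
    -- step 1 : kleene C' i j ≤ cw C j i
    obtain ⟨x, hx, hxj, hxi⟩ := exists_point hsupp' hneH hboundH hzeroH j i hk'fin
    have hx2 : x ∈ wdp C := by rw [← hQ]; exact hx
    have hstep1 : kleene C' i j ≤ ((cw C j i : ℝ) : Trop) := by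
      have h3 := hx2 i j (hneE j i hw.1).symm
      rw [hxj, sub_zero, hxi, hCval] at h3
      exact h3
    -- step 2 : the minimizing EH-path must be the single edge
    obtain ⟨c, k, hp, hle⟩ := kleene_exists_path hsupp' hneH hk'fin
    have hji : j ≠ i := hneH j i heH
    have hle' : C' i j ≤ kleene C' i j := by
      cases hp with
      | nil => exact absurd rfl hji
      | cons he t =>
        rename_i m c2 k2
        rcases Nat.eq_zero_or_pos k2 with hk2 | hk2
        · subst hk2
          obtain ⟨rfl, rfl⟩ := t.eq_of_zero
          rw [entry_of_edge hsupp' hneH he]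
          simpa using hle
        · exfalso
          have hmi : m ≠ i := by
            rintro rfl
            exact absurd (hzeroH t) (by omega)
          have hjm : j ≠ m := hneH j m he
          have hbnd1 : kleene C m j ≤ ((cw C' j m : ℝ) : Trop) := by
            rw [← entry_of_edge hsupp' hneH he]
            exact hb j m he
          have hbnd2 : kleene C i m ≤ ((c2 : ℝ) : Trop) :=
            eh_path_lb hdag hsupp hsub hsupp' (fun a b hab => hb a b hab) t
          have hf1 : kleene C m j ≠ ⊤ := fun h => by simp [h] at hbnd1
          have hf2 : kleene C i m ≠ ⊤ := fun h => by simp [h] at hbnd2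
          obtain ⟨ca, ka, pa, lea⟩ := kleene_exists_path hsupp hneE hf1
          obtain ⟨cb, kb, pb, leb⟩ := kleene_exists_path hsupp hneE hf2
          have hka : 1 ≤ ka := by
            rcases Nat.eq_zero_or_pos ka with h0 | h0
            · subst h0; exact absurd pa.eq_of_zero.1 hjm
            · exact h0
          have hkb : 1 ≤ kb := by
            rcases Nat.eq_zero_or_pos kb with h0 | h0
            · subst h0; exact absurd pb.eq_of_zero.1 hmi
            · exact h0
          have pc := pa.trans pb
          obtain ⟨p, hpp, hwt, hlen⟩ := pc.toList
          have hpe : p ≠ [j, i] := by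
            intro h0
            rw [h0] at hlen
            simp at hlen
            omega
          have hlt := hw.2 p hpp hpe
          rw [hwt] at hlt
          have r1 : ca ≤ cw C' j m := by
            exact_mod_cast le_trans lea hbnd1
          have r2 : cb ≤ c2 := by
            exact_mod_cast le_trans leb hbnd2
          have r3 : cw C' j m + c2 ≤ cw C j i := by
            exact_mod_cast le_trans hle hstep1
          linarith
    rw [hkval]
    refine le_antisymm (le_trans hle' hstep1) ?_
    rw [← hkval]
    exact hb j i heH
  · -- backward direction
    rintro ⟨ha, hb⟩
    have hb' : ∀ j i, EH j i → kleene C i j ≤ C' i j := by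
      intro j i he
      by_cases hw : InWTR E (cw C) j i
      · rw [ha j i hw]
      · exact hb j i he hw
    ext x
    constructor
    · -- wdp C' ⊆ wdp C
      intro hx a b hab
      by_cases hCab : C a b = ⊤
      · rw [hCab]; exact le_top
      have hedge : E b a := (hsupp.2 a b hab).1 hCab
      have hp1 : PW E (cw C) b a (cw C b a + 0) 1 := PW.cons hedge (PW.nil a)
      obtain ⟨c', k', hle, hq⟩ := wtr_span hdag hsupp _ b a _ 1 le_rfl hp1
      have hxe : ∀ u v, InWTR E (cw C) u v → x v - x u ≤ cw C u v := by
        intro u v huv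
        have heH := hflat u v huv
        have h1 := hx v u (hneH u v heH).symm
        rw [ha u v huv, (wtr_kleene hdag hsupp huv).1] at h1
        exact_mod_cast h1
      have h2 := sum_along hxe hq
      have h3 : x a - x b ≤ cw C b a := by
        have : cw C b a + 0 = cw C b a := add_zero _
        linarith
      rw [entry_of_edge hsupp hneE hedge]
      exact_mod_cast h3
    · -- wdp C ⊆ wdp C'
      intro hx a b hab
      by_cases hCab : C' a b = ⊤
      · rw [hCab]; exact le_top
      have hedge : EH b a := (hsupp'.2 a b hab).1 hCab
      obtain ⟨hne, p, hpp⟩ := hsub b a hedge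
      have hr := hpp.toPW (cw C)
      have hkfin : kleene C a b ≠ ⊤ := by
        have h1 := kleene_le_path hsupp hneE hboundE hr
        exact fun h => by simp [h] at h1
      obtain ⟨c, k, hp, hle⟩ := kleene_exists_path hsupp hneE hkfin
      have hxe : ∀ u v, E u v → x v - x u ≤ cw C u v :=
        fun u v huv => wdp_edge hsupp hneE hx huv
      have h2 := sum_along hxe hp
      calc ((x a - x b : ℝ) : Trop) ≤ (c : Trop) := by exact_mod_cast h2
      _ ≤ kleene C a b := hle
      _ ≤ C' a b := hb' b a hedge
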